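/- In a regular multi-pointed category with kernels, for any square of type (1), the direct images along the split epimorphism g of the kernel pair of c and of its largest star subrelation satisfy g⟨Eq(c)⟩ = Eq(d) and g⟨Eq(c)*⟩ = Eq(d)*. -/

import Mathlib

open CategoryTheory CategoryTheory.Limits

universe v u

namespace Paper

variable {𝒞 : Type u} [Category.{v} 𝒞]

/-- `f` is a regular epimorphism: it is a coequaliser of some pair of morphisms. -/
def IsRegEpi {X Y : 𝒞} (f : X ⟶ Y) : Prop :=
  ∃ (Z : 𝒞) (a b : Z ⟶ X), a ≫ f = b ≫ f ∧
    ∀ {T : 𝒞} (h : X ⟶ T), a ≫ h = b ≫ h → ∃! u : Y ⟶ T, f ≫ u = h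

/-- Regular epimorphisms are pullback-stable. -/
def RegEpisStable (𝒞 : Type u) [Category.{v} 𝒞] : Prop :=
  ∀ {P X Y Z : 𝒞} (p₁ : P ⟶ X) (p₂ : P ⟶ Y) (f : X ⟶ Z) (g : Y ⟶ Z),
    IsPullback p₁ p₂ f g → IsRegEpi g → IsRegEpi p₁

/-- Every kernel pair admits a coequaliser. -/
def KernelPairsHaveCoequalisers (𝒞 : Type u) [Category.{v} 𝒞] : Prop :=
  ∀ {R X Y : 𝒞} (f : X ⟶ Y) (a b : R ⟶ X), IsKernelPair f a b →
    ∃ (Q : 𝒞) (q : X ⟶ Q), a ≫ q = b ≫ q ∧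
      ∀ {T : 𝒞} (h : X ⟶ T), a ≫ h = b ≫ h → ∃! u : Q ⟶ T, q ≫ u = h

/-- A relation from `X` to `Y`: a jointly monomorphic span. -/
structure Rel (𝒞 : Type u) [Category.{v} 𝒞] (X Y : 𝒞) where
  R : 𝒞
  p1 : R ⟶ X
  p2 : R ⟶ Y
  jm : ∀ {Z : 𝒞} (a b : Z ⟶ R), a ≫ p1 = b ≫ p1 → a ≫ p2 = b ≫ p2 → a = b

variable {X Y Z : 𝒞}

/-- `ρ` is a subrelation of `σ`. -/
def Rel.le (ρ σ : Rel 𝒞 X Y) : Prop :=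
  ∃ j : ρ.R ⟶ σ.R, j ≫ σ.p1 = ρ.p1 ∧ j ≫ σ.p2 = ρ.p2

/-- `ρ` and `σ` are the same relation (isomorphic as subobjects of `X × Y`). -/
def Rel.equiv (ρ σ : Rel 𝒞 X Y) : Prop := ρ.le σ ∧ σ.le ρ

/-- The opposite relation. -/
def Rel.op (ρ : Rel 𝒞 X Y) : Rel 𝒞 Y X :=
  ⟨ρ.R, ρ.p2, ρ.p1, fun a b h2 h1 => ρ.jm a b h1 h2⟩

/-- A morphism viewed as a relation. -/
def homRel (f : X ⟶ Y) : Rel 𝒞 X Y :=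
  ⟨X, 𝟙 X, f, fun a b h _ => by simpa using h⟩

/-- The discrete (diagonal) relation on `X`. -/
def diagRel (X : 𝒞) : Rel 𝒞 X X := homRel (𝟙 X)

/-- The kernel pair `Eq(f)` of `f` as a relation on `X`. -/
noncomputable def kerPairRel [HasPullbacks 𝒞] (f : X ⟶ Y) : Rel 𝒞 X X :=
  ⟨pullback f f, pullback.fst f f, pullback.snd f f,
    fun a b h1 h2 => pullback.hom_ext h1 h2⟩

/-- `τ` is the composite `σρ` (first `ρ` from `X` to `Y`, then `σ` from `Y` to `Z`),
i.e. the (regular epi, jointly mono) factorisation of the span induced on the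
pullback of `ρ.p2` and `σ.p1`. -/
def IsRelComp [HasPullbacks 𝒞] (σ : Rel 𝒞 Y Z) (ρ : Rel 𝒞 X Y) (τ : Rel 𝒞 X Z) : Prop :=
  ∃ e : pullback ρ.p2 σ.p1 ⟶ τ.R, IsRegEpi e ∧
    e ≫ τ.p1 = pullback.fst ρ.p2 σ.p1 ≫ ρ.p1 ∧
    e ≫ τ.p2 = pullback.snd ρ.p2 σ.p1 ≫ σ.p2

def Rel.IsReflexive (ρ : Rel 𝒞 X X) : Prop :=
  ∃ r : X ⟶ ρ.R, r ≫ ρ.p1 = 𝟙 X ∧ r ≫ ρ.p2 = 𝟙 X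

def Rel.IsSymmetric (ρ : Rel 𝒞 X X) : Prop :=
  ∃ s : ρ.R ⟶ ρ.R, s ≫ ρ.p1 = ρ.p2 ∧ s ≫ ρ.p2 = ρ.p1

def Rel.IsTransitive [HasPullbacks 𝒞] (ρ : Rel 𝒞 X X) : Prop :=
  ∃ t : pullback ρ.p2 ρ.p1 ⟶ ρ.R,
    t ≫ ρ.p1 = pullback.fst ρ.p2 ρ.p1 ≫ ρ.p1 ∧
    t ≫ ρ.p2 = pullback.snd ρ.p2 ρ.p1 ≫ ρ.p2

def Rel.IsEquivalence [HasPullbacks 𝒞] (ρ : Rel 𝒞 X X) : Prop :=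
  ρ.IsReflexive ∧ ρ.IsSymmetric ∧ ρ.IsTransitive

/-- A finitely complete category is a Mal'tsev category when every reflexive
relation in it is an equivalence relation. -/
def IsMaltsev (𝒞 : Type u) [Category.{v} 𝒞] [HasPullbacks 𝒞] : Prop :=
  ∀ {X : 𝒞} (ρ : Rel 𝒞 X X), ρ.IsReflexive → ρ.IsEquivalence

/-- A square of type (1): split epimorphisms `f` (with section `s`) and `g`
(with section `t`), regular epimorphisms `c` and `d`, with `f·c = d·g` and
`s·d = c·t`. -/
structure IsSquare1 {A B E D : 𝒞} (f : A ⟶ B) (s : B ⟶ A) (g : E ⟶ D) (t : D ⟶ E)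
    (c : E ⟶ A) (d : D ⟶ B) : Prop where
  sec_f : s ≫ f = 𝟙 B
  sec_g : t ≫ g = 𝟙 D
  regepi_c : IsRegEpi c
  regepi_d : IsRegEpi d
  comm1 : c ≫ f = g ≫ d
  comm2 : d ≫ s = t ≫ c

/-- `N` is an ideal of morphisms. -/
def IsIdeal (N : MorphismProperty 𝒞) : Prop :=
  ∀ {X Y Z : 𝒞} (f : X ⟶ Y) (g : Y ⟶ Z), N f ∨ N g → N (f ≫ g)

/-- `n` is an `N`-kernel of `f`. -/
def IsNKernel (N : MorphismProperty 𝒞) {X Y K : 𝒞} (f : X ⟶ Y) (n : K ⟶ X) : Prop :=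
  N (n ≫ f) ∧ ∀ {Z : 𝒞} (m : Z ⟶ X), N (m ≫ f) → ∃! u : Z ⟶ K, u ≫ n = m

/-- Every morphism admits an `N`-kernel. -/
def HasNKernels (N : MorphismProperty 𝒞) : Prop :=
  ∀ {X Y : 𝒞} (f : X ⟶ Y), ∃ (K : 𝒞) (n : K ⟶ X), IsNKernel N f n

/-- `τ` is the largest star subrelation `ρ*` of the relation `ρ`. -/
def IsLargestStarSub (N : MorphismProperty 𝒞) (ρ τ : Rel 𝒞 X Y) : Prop :=
  τ.le ρ ∧ N τ.p1 ∧ ∀ σ : Rel 𝒞 X Y, σ.le ρ → N σ.p1 → σ.le τ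

/-- `(s1, s2)` is the star-kernel of `f`: the universal star coequalised by `f`. -/
def IsStarKernel (N : MorphismProperty 𝒞) {S X Y : 𝒞} (f : X ⟶ Y) (s1 s2 : S ⟶ X) : Prop :=
  N s1 ∧ s1 ≫ f = s2 ≫ f ∧
    ∀ {T : 𝒞} (t1 t2 : T ⟶ X), N t1 → t1 ≫ f = t2 ≫ f →
      ∃! u : T ⟶ S, u ≫ s1 = t1 ∧ u ≫ s2 = t2

/-- `(ν1, ν2)` is the star of the pullback relation of `(g, δ)`: the universal
pair with `ν1 ∈ N` and `δ·ν1 = g·ν2`. -/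
def IsStarPullbackRel (N : MorphismProperty 𝒞) {W E D P : 𝒞} (δ : W ⟶ D) (g : E ⟶ D)
    (ν1 : P ⟶ W) (ν2 : P ⟶ E) : Prop :=
  N ν1 ∧ ν1 ≫ δ = ν2 ≫ g ∧
    ∀ {T : 𝒞} (t1 : T ⟶ W) (t2 : T ⟶ E), N t1 → t1 ≫ δ = t2 ≫ g →
      ∃! u : T ⟶ P, u ≫ ν1 = t1 ∧ u ≫ ν2 = t2

/-- `f` is a coequaliser of `(s1, s2)`. -/
def IsCoeqOf {S X Y : 𝒞} (f : X ⟶ Y) (s1 s2 : S ⟶ X) : Prop :=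
  s1 ≫ f = s2 ≫ f ∧ ∀ {T : 𝒞} (h : X ⟶ T), s1 ≫ h = s2 ≫ h → ∃! u : Y ⟶ T, f ≫ u = h

/-- Star-regularity: every regular epimorphism is a coequaliser of a star. -/
def StarRegular (𝒞 : Type u) [Category.{v} 𝒞] (N : MorphismProperty 𝒞) : Prop :=
  ∀ {X Y : 𝒞} (f : X ⟶ Y), IsRegEpi f →
    ∃ (S : 𝒞) (s1 s2 : S ⟶ X), N s1 ∧ IsCoeqOf f s1 s2

/-- `f` is saturating: the induced morphism between the `N`-kernels of the
identities is a regular epimorphism. -/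
def Saturating (N : MorphismProperty 𝒞) {X Y : 𝒞} (f : X ⟶ Y) : Prop :=
  ∀ {KX KY : 𝒞} (nX : KX ⟶ X) (nY : KY ⟶ Y), IsNKernel N (𝟙 X) nX → IsNKernel N (𝟙 Y) nY →
    ∀ u : KX ⟶ KY, u ≫ nY = nX ≫ f → IsRegEpi u

/-- `X` is an `N`-trivial object. -/
def NTrivial (N : MorphismProperty 𝒞) (X : 𝒞) : Prop := N (𝟙 X)

/-- The multi-pointed category has enough trivial objects: `N` is a closed ideal and
`N`-trivial objects are closed under subobjects and squares. -/
def EnoughTrivialObjects [HasBinaryProducts 𝒞] (N : MorphismProperty 𝒞) : Prop :=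
  (∀ {X Y : 𝒞} (f : X ⟶ Y), N f → ∃ (T : 𝒞) (p : X ⟶ T) (q : T ⟶ Y),
      NTrivial N T ∧ p ≫ q = f) ∧
  (∀ {S X : 𝒞} (m : S ⟶ X), Mono m → NTrivial N X → NTrivial N S) ∧
  (∀ X : 𝒞, NTrivial N X → NTrivial N (X ⨯ X))

/-- A square of type (1) is a star-regular pushout when `(c g°)* = f° d*`. -/
def IsStarRegularPushout [HasPullbacks 𝒞] (N : MorphismProperty 𝒞) {A B E D : 𝒞}
    (f : A ⟶ B) (g : E ⟶ D) (c : E ⟶ A) (d : D ⟶ B) : Prop :=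
  ∀ (ρ τ μ : Rel 𝒞 D A) (ds : Rel 𝒞 D B),
    IsRelComp (homRel c) (Rel.op (homRel g)) ρ → IsLargestStarSub N ρ τ →
    IsLargestStarSub N (homRel d) ds → IsRelComp (Rel.op (homRel f)) ds μ →
    τ.equiv μ

/-- 2-star-permutability: `Eq(f) Eq(g)* = Eq(g) Eq(f)*` for all regular
epimorphisms `f`, `g` with the same domain. -/
def TwoStarPermutable (𝒞 : Type u) [Category.{v} 𝒞] [HasPullbacks 𝒞]
    (N : MorphismProperty 𝒞) : Prop :=
  ∀ {X Y Z : 𝒞} (f : X ⟶ Y) (g : X ⟶ Z), IsRegEpi f → IsRegEpi g →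
    ∀ (sf sg : Rel 𝒞 X X), IsLargestStarSub N (kerPairRel f) sf →
      IsLargestStarSub N (kerPairRel g) sg →
    ∀ (τ₁ τ₂ : Rel 𝒞 X X), IsRelComp (kerPairRel f) sg τ₁ →
      IsRelComp (kerPairRel g) sf τ₂ → τ₁.equiv τ₂

section Pointed

variable [HasZeroMorphisms 𝒞]

/-- `k` is a kernel of `f`. -/
def IsKernelOf {K X Y : 𝒞} (k : K ⟶ X) (f : X ⟶ Y) : Prop :=
  k ≫ f = 0 ∧ ∀ {Z : 𝒞} (m : Z ⟶ X), m ≫ f = 0 → ∃! u : Z ⟶ K, u ≫ k = m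

/-- `f` is a cokernel of `k`. -/
def IsCokernelOf {X Y K : 𝒞} (f : X ⟶ Y) (k : K ⟶ X) : Prop :=
  k ≫ f = 0 ∧ ∀ {T : 𝒞} (h : X ⟶ T), k ≫ h = 0 → ∃! u : Y ⟶ T, f ≫ u = h

/-- Short exact sequence `K → X ↠ Y`. -/
def IsShortExact {K X Y : 𝒞} (k : K ⟶ X) (f : X ⟶ Y) : Prop :=
  IsKernelOf k f ∧ IsCokernelOf f k

/-- Subtractivity: every reflexive, left punctual relation is right punctual. -/
def IsSubtractive (𝒞 : Type u) [Category.{v} 𝒞] [HasZeroMorphisms 𝒞] : Prop :=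
  ∀ {X : 𝒞} (ρ : Rel 𝒞 X X), ρ.IsReflexive →
    (∃ l : X ⟶ ρ.R, l ≫ ρ.p1 = 𝟙 X ∧ l ≫ ρ.p2 = 0) →
    (∃ r : X ⟶ ρ.R, r ≫ ρ.p1 = 0 ∧ r ≫ ρ.p2 = 𝟙 X)

end Pointed

/-- `τ` is the direct image of the relation `ρ` on `X` along the regular
epimorphism `h : X → Y`, i.e. the (regular epi, jointly mono) factorisation of
`⟨h·ρ.p1, h·ρ.p2⟩`. -/
def IsDirectImage {X Y : 𝒞} (h : X ⟶ Y) (ρ : Rel 𝒞 X X) (τ : Rel 𝒞 Y Y) : Prop :=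
  ∃ e : ρ.R ⟶ τ.R, IsRegEpi e ∧ e ≫ τ.p1 = ρ.p1 ≫ h ∧ e ≫ τ.p2 = ρ.p2 ≫ h

lemma IsRegEpi.cancel {X Y : 𝒞} {e : X ⟶ Y} (he : IsRegEpi e) {T : 𝒞} {u v : Y ⟶ T}
    (h : e ≫ u = e ≫ v) : u = v := by
  obtain ⟨Z, a, b, hab, huniv⟩ := he
  have h1 : a ≫ e ≫ u = b ≫ e ≫ u := by
    rw [← Category.assoc, ← Category.assoc, hab]
  obtain ⟨w, _, hwu⟩ := huniv (e ≫ u) h1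
  exact (hwu u rfl).trans (hwu v h.symm).symm

lemma IsRegEpi.factor {X Y T : 𝒞} {e : X ⟶ Y} (he : IsRegEpi e) (h : X ⟶ T)
    (hcoeq : ∀ {Z : 𝒞} (a b : Z ⟶ X), a ≫ e = b ≫ e → a ≫ h = b ≫ h) :
    ∃ u : Y ⟶ T, e ≫ u = h := by
  obtain ⟨Z, a, b, hab, huniv⟩ := he
  obtain ⟨u, hu, _⟩ := huniv h (hcoeq a b hab)
  exact ⟨u, hu⟩

/-- In a regular multi-pointed category with kernels, for any square
of type (1) one has `g⟨Eq(c)⟩ = Eq(d)` and `g⟨Eq(c)*⟩ = Eq(d)*`. -/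
theorem statement5 [HasFiniteLimits 𝒞]
    (hcoeq : KernelPairsHaveCoequalisers 𝒞) (hstab : RegEpisStable 𝒞)
    (N : MorphismProperty 𝒞) (hN : IsIdeal N) (hker : HasNKernels N)
    {A B E D : 𝒞} (f : A ⟶ B) (s : B ⟶ A) (g : E ⟶ D) (t : D ⟶ E)
    (c : E ⟶ A) (d : D ⟶ B) (hsq : IsSquare1 f s g t c d) :
    (∀ τ : Rel 𝒞 D D, IsDirectImage g (kerPairRel c) τ → τ.equiv (kerPairRel d)) ∧
    (∀ (sc : Rel 𝒞 E E) (τ sd : Rel 𝒞 D D),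
      IsLargestStarSub N (kerPairRel c) sc → IsDirectImage g sc τ →
      IsLargestStarSub N (kerPairRel d) sd → τ.equiv sd) := by
  obtain ⟨sec_f, sec_g, hc, hd, comm1, comm2⟩ := hsq
  have hgd : g ≫ d = c ≫ f := comm1.symm
  have hpcond : (pullback.fst c c ≫ g) ≫ d = (pullback.snd c c ≫ g) ≫ d := by
    rw [Category.assoc, Category.assoc, hgd, ← Category.assoc, ← Category.assoc,
      pullback.condition]
  have hqcond : (pullback.fst d d ≫ t) ≫ c = (pullback.snd d d ≫ t) ≫ c := by
    rw [Category.assoc, Category.assoc, ← comm2, ← Category.assoc, ← Category.assoc,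
      pullback.condition]
  refine ⟨?_, ?_⟩
  · rintro τ ⟨e, he, h1, h2⟩
    constructor
    · -- τ ≤ Eq(d)
      have hm1 : pullback.lift _ _ hpcond ≫ pullback.fst d d = e ≫ τ.p1 := by
        rw [pullback.lift_fst]; exact h1.symm
      have hm2 : pullback.lift _ _ hpcond ≫ pullback.snd d d = e ≫ τ.p2 := by
        rw [pullback.lift_snd]; exact h2.symm
      obtain ⟨j, hj⟩ := he.factor (pullback.lift _ _ hpcond) (fun a b hab => by
        apply pullback.hom_ext
        · erw [Category.assoc, Category.assoc, hm1, ← Category.assoc, ← Category.assoc, hab]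
        · erw [Category.assoc, Category.assoc, hm2, ← Category.assoc, ← Category.assoc, hab])
      refine ⟨j, he.cancel ?_, he.cancel ?_⟩
      · erw [← Category.assoc, hj]; exact hm1
      · erw [← Category.assoc, hj]; exact hm2
    · -- Eq(d) ≤ τ
      refine ⟨pullback.lift _ _ hqcond ≫ e, ?_, ?_⟩
      · erw [Category.assoc, h1, show (kerPairRel c).p1 = pullback.fst c c from rfl,
          ← Category.assoc, pullback.lift_fst, Category.assoc, sec_g, Category.comp_id]
        rfl
      · erw [Category.assoc, h2, show (kerPairRel c).p2 = pullback.snd c c from rfl,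
          ← Category.assoc, pullback.lift_snd, Category.assoc, sec_g, Category.comp_id]
        rfl
  · rintro sc τ sd ⟨⟨j0, hj01, hj02⟩, hscN, hscU⟩ ⟨e, he, h1, h2⟩ ⟨hsdle, hsdN, hsdU⟩
    have hg01 : j0 ≫ pullback.fst c c = sc.p1 := hj01
    have hg02 : j0 ≫ pullback.snd c c = sc.p2 := hj02
    constructor
    · -- τ ≤ sd
      have hτle : τ.le (kerPairRel d) := by
        have hm1 : j0 ≫ pullback.lift _ _ hpcond ≫ pullback.fst d d = e ≫ τ.p1 := by
          erw [pullback.lift_fst, ← Category.assoc, hg01, h1]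
        have hm2 : j0 ≫ pullback.lift _ _ hpcond ≫ pullback.snd d d = e ≫ τ.p2 := by
          erw [pullback.lift_snd, ← Category.assoc, hg02, h2]
        obtain ⟨j, hj⟩ := he.factor (j0 ≫ pullback.lift _ _ hpcond) (fun a b hab => by
          apply pullback.hom_ext
          · simp only [Category.assoc]
            rw [hm1, ← Category.assoc, ← Category.assoc, hab]
          · simp only [Category.assoc]
            rw [hm2, ← Category.assoc, ← Category.assoc, hab])
        refine ⟨j, he.cancel ?_, he.cancel ?_⟩
        · erw [← Category.assoc, hj, Category.assoc]; exact hm1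
        · erw [← Category.assoc, hj, Category.assoc]; exact hm2
      have hτN : N τ.p1 := by
        obtain ⟨K, n, hnN, hnuniv⟩ := hker (𝟙 D)
        have hNn : N n := by simpa using hnN
        have hnmono : ∀ {W : 𝒞} (u₁ u₂ : W ⟶ K), u₁ ≫ n = u₂ ≫ n → u₁ = u₂ := by
          intro W u₁ u₂ h
          have hNm : N ((u₁ ≫ n) ≫ 𝟙 D) := by
            rw [Category.comp_id]; exact hN _ _ (Or.inr hNn)
          obtain ⟨w, _, hw⟩ := hnuniv (u₁ ≫ n) hNm
          exact (hw u₁ rfl).trans (hw u₂ h.symm).symm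
        have hscg : N ((sc.p1 ≫ g) ≫ 𝟙 D) := by
          rw [Category.comp_id]; exact hN _ _ (Or.inl hscN)
        obtain ⟨u, hu, _⟩ := hnuniv (sc.p1 ≫ g) hscg
        obtain ⟨v, hv⟩ := he.factor u (fun a b hab => by
          apply hnmono
          rw [Category.assoc, Category.assoc, hu, ← h1, ← Category.assoc,
            ← Category.assoc, hab])
        have hvn : v ≫ n = τ.p1 := he.cancel (by
          rw [← Category.assoc, hv, hu, h1])
        rw [← hvn]
        exact hN _ _ (Or.inr hNn)
      exact hsdU τ hτle hτN
    · -- sd ≤ τ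
      have hσjm : ∀ {W : 𝒞} (a b : W ⟶ sd.R),
          a ≫ (sd.p1 ≫ t) = b ≫ (sd.p1 ≫ t) → a ≫ (sd.p2 ≫ t) = b ≫ (sd.p2 ≫ t) →
          a = b := by
        intro W a b hA hB
        refine sd.jm a b ?_ ?_
        · have := congrArg (· ≫ g) hA
          simpa [Category.assoc, sec_g] using this
        · have := congrArg (· ≫ g) hB
          simpa [Category.assoc, sec_g] using this
      set σ : Rel 𝒞 E E := ⟨sd.R, sd.p1 ≫ t, sd.p2 ≫ t, hσjm⟩ with hσ
      have hσcond : σ.p1 ≫ c = σ.p2 ≫ c := by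
        obtain ⟨jd, hjd1, hjd2⟩ := hsdle
        have hcond : sd.p1 ≫ d = sd.p2 ≫ d := by
          rw [← hjd1, ← hjd2, Category.assoc, Category.assoc]
          exact congrArg (jd ≫ ·) pullback.condition
        show (sd.p1 ≫ t) ≫ c = (sd.p2 ≫ t) ≫ c
        rw [Category.assoc, Category.assoc, ← comm2, ← Category.assoc, hcond,
          Category.assoc]
      have hσle : σ.le (kerPairRel c) :=
        ⟨pullback.lift σ.p1 σ.p2 hσcond, pullback.lift_fst _ _ _, pullback.lift_snd _ _ _⟩
      have hσN : N σ.p1 := hN _ _ (Or.inl hsdN)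
      obtain ⟨k, hk1, hk2⟩ := hscU σ hσle hσN
      refine ⟨k ≫ e, ?_, ?_⟩
      · rw [Category.assoc, h1, ← Category.assoc, hk1]
        show (sd.p1 ≫ t) ≫ g = sd.p1
        rw [Category.assoc, sec_g, Category.comp_id]
      · rw [Category.assoc, h2, ← Category.assoc, hk2]
        show (sd.p2 ≫ t) ≫ g = sd.p2
        rw [Category.assoc, sec_g, Category.comp_id]

end Paper
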